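/- Let (X, μ) be a measure space, let h > 0 and C₁, C₂ > 0, and let f, g ∈ L²(μ; M_{3×3}(ℝ)) satisfy ∫ ‖f − g‖_F² dμ ≤ C₁ h³ and ∫ ‖f‖_F² dμ + ∫ ‖g‖_F² dμ ≤ C₂ h. Then ∫ ‖fᵀf − gᵀg‖_F dμ ≤ √(2 C₁ C₂) · h². -/

import Mathlib

open MeasureTheory Matrix

attribute [local instance] Matrix.frobeniusNormedAddCommGroup

/-- **Quantitative footnote estimate of Proposition 17.** If `∫‖f−g‖² ≤ C₁h³` and
`∫‖f‖² + ∫‖g‖² ≤ C₂h`, then `∫‖fᵀf − gᵀg‖ ≤ √(2C₁C₂)·h²` (Frobenius norms,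
pointwise matrix products). -/
theorem stmt2 {X : Type*} [MeasurableSpace X] (μ : Measure X)
    (h C₁ C₂ : ℝ) (hh : 0 < h) (hC₁ : 0 < C₁) (hC₂ : 0 < C₂)
    (f g : X → Matrix (Fin 3) (Fin 3) ℝ)
    (hf : MemLp f 2 μ) (hg : MemLp g 2 μ)
    (hfg : ∫ x, ‖f x - g x‖ ^ 2 ∂μ ≤ C₁ * h ^ 3)
    (hbd : (∫ x, ‖f x‖ ^ 2 ∂μ) + ∫ x, ‖g x‖ ^ 2 ∂μ ≤ C₂ * h) :
    ∫ x, ‖(f x)ᵀ * f x - (g x)ᵀ * g x‖ ∂μ ≤ Real.sqrt (2 * C₁ * C₂) * h ^ 2 := by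
  have hFmem : MemLp (fun x => ‖f x - g x‖) 2 μ := (hf.sub hg).norm
  have hGmem : MemLp (fun x => ‖f x‖ + ‖g x‖) 2 μ := hf.norm.add hg.norm
  -- integrability of the product of two L² functions
  have hprod : Integrable (fun x => ‖f x - g x‖ * (‖f x‖ + ‖g x‖)) μ := by
    have := hGmem.smul (φ := fun x => ‖f x - g x‖) hFmem
      (p := 2) (q := 2) (r := 1)
    simpa [Pi.smul_apply, smul_eq_mul, Pi.mul_def] using memLp_one_iff_integrable.mp this
  -- pointwise estimate
  have hpt : ∀ x, ‖(f x)ᵀ * f x - (g x)ᵀ * g x‖ ≤ ‖f x - g x‖ * (‖f x‖ + ‖g x‖) := by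
    intro x
    have hdec : (f x)ᵀ * f x - (g x)ᵀ * g x
        = (f x)ᵀ * (f x - g x) + (f x - g x)ᵀ * g x := by
      rw [Matrix.transpose_sub, Matrix.mul_sub, Matrix.sub_mul]; abel
    calc ‖(f x)ᵀ * f x - (g x)ᵀ * g x‖
        = ‖(f x)ᵀ * (f x - g x) + (f x - g x)ᵀ * g x‖ := by rw [hdec]
      _ ≤ ‖(f x)ᵀ * (f x - g x)‖ + ‖(f x - g x)ᵀ * g x‖ := norm_add_le _ _
      _ ≤ ‖(f x)ᵀ‖ * ‖f x - g x‖ + ‖(f x - g x)ᵀ‖ * ‖g x‖ :=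
          add_le_add (Matrix.frobenius_norm_mul _ _) (Matrix.frobenius_norm_mul _ _)
      _ = ‖f x - g x‖ * (‖f x‖ + ‖g x‖) := by
          rw [Matrix.frobenius_norm_transpose, Matrix.frobenius_norm_transpose]; ring
  -- first step: bound the integral by ∫ F·G
  have step1 : ∫ x, ‖(f x)ᵀ * f x - (g x)ᵀ * g x‖ ∂μ
      ≤ ∫ x, ‖f x - g x‖ * (‖f x‖ + ‖g x‖) ∂μ :=
    integral_mono_of_nonneg (Filter.Eventually.of_forall fun x => norm_nonneg _) hprod
      (Filter.Eventually.of_forall hpt)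
  -- Hölder / Cauchy–Schwarz
  have hconj : Real.HolderConjugate 2 2 := ⟨by norm_num, by norm_num, by norm_num⟩
  have h2 : (ENNReal.ofReal (2:ℝ)) = 2 := by norm_num
  have cs : ∫ x, ‖f x - g x‖ * (‖f x‖ + ‖g x‖) ∂μ
      ≤ (∫ x, ‖f x - g x‖ ^ (2:ℝ) ∂μ) ^ (1/2:ℝ) *
        (∫ x, (‖f x‖ + ‖g x‖) ^ (2:ℝ) ∂μ) ^ (1/2:ℝ) := by
    refine integral_mul_le_Lp_mul_Lq_of_nonneg hconj
      (Filter.Eventually.of_forall fun x => norm_nonneg _)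
      (Filter.Eventually.of_forall fun x => by positivity) ?_ ?_
    · rw [h2]; exact hFmem
    · rw [h2]; exact hGmem
  -- convert rpow to pow
  have eF : ∫ x, ‖f x - g x‖ ^ (2:ℝ) ∂μ = ∫ x, ‖f x - g x‖ ^ 2 ∂μ := by
    refine integral_congr_ae (Filter.Eventually.of_forall fun x => ?_)
    beta_reduce
    rw [show ((2:ℝ) = ((2:ℕ):ℝ)) by norm_num, Real.rpow_natCast]
  have eG : ∫ x, (‖f x‖ + ‖g x‖) ^ (2:ℝ) ∂μ = ∫ x, (‖f x‖ + ‖g x‖) ^ 2 ∂μ := by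
    refine integral_congr_ae (Filter.Eventually.of_forall fun x => ?_)
    beta_reduce
    rw [show ((2:ℝ) = ((2:ℕ):ℝ)) by norm_num, Real.rpow_natCast]
  -- bound ∫ G²
  have hGsq : ∫ x, (‖f x‖ + ‖g x‖) ^ 2 ∂μ ≤ 2 * (C₂ * h) := by
    have hint : Integrable (fun x => 2 * (‖f x‖ ^ 2 + ‖g x‖ ^ 2)) μ :=
      ((hf.norm.integrable_sq.add hg.norm.integrable_sq).const_mul 2)
    have hmono : ∫ x, (‖f x‖ + ‖g x‖) ^ 2 ∂μ ≤ ∫ x, 2 * (‖f x‖ ^ 2 + ‖g x‖ ^ 2) ∂μ := by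
      refine integral_mono hGmem.integrable_sq hint fun x => ?_
      nlinarith [sq_nonneg (‖f x‖ - ‖g x‖)]
    have : ∫ x, 2 * (‖f x‖ ^ 2 + ‖g x‖ ^ 2) ∂μ
        = 2 * ((∫ x, ‖f x‖ ^ 2 ∂μ) + ∫ x, ‖g x‖ ^ 2 ∂μ) := by
      rw [integral_const_mul, integral_add hf.norm.integrable_sq hg.norm.integrable_sq]
    linarith [hmono, this ▸ hmono]
  -- nonnegativity of the integrals
  have hFnn : 0 ≤ ∫ x, ‖f x - g x‖ ^ 2 ∂μ := integral_nonneg fun x => by positivity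
  have hGnn : 0 ≤ ∫ x, (‖f x‖ + ‖g x‖) ^ 2 ∂μ := integral_nonneg fun x => by positivity
  -- put everything together
  have rp : ∀ a : ℝ, 0 ≤ a → a ^ (1/2:ℝ) = Real.sqrt a := fun a ha =>
    (Real.sqrt_eq_rpow a).symm
  rw [eF, eG] at cs
  have final : (∫ x, ‖f x - g x‖ ^ 2 ∂μ) ^ (1/2:ℝ) * (∫ x, (‖f x‖ + ‖g x‖) ^ 2 ∂μ) ^ (1/2:ℝ)
      ≤ Real.sqrt (2 * C₁ * C₂) * h ^ 2 := by
    rw [rp _ hFnn, rp _ hGnn]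
    calc Real.sqrt (∫ x, ‖f x - g x‖ ^ 2 ∂μ) * Real.sqrt (∫ x, (‖f x‖ + ‖g x‖) ^ 2 ∂μ)
        ≤ Real.sqrt (C₁ * h ^ 3) * Real.sqrt (2 * (C₂ * h)) :=
          mul_le_mul (Real.sqrt_le_sqrt hfg) (Real.sqrt_le_sqrt hGsq)
            (Real.sqrt_nonneg _) (Real.sqrt_nonneg _)
      _ = Real.sqrt (C₁ * h ^ 3 * (2 * (C₂ * h))) :=
          (Real.sqrt_mul (by positivity) _).symm
      _ = Real.sqrt (2 * C₁ * C₂ * (h ^ 2) ^ 2) := by ring_nf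
      _ = Real.sqrt (2 * C₁ * C₂) * h ^ 2 := by
          rw [Real.sqrt_mul (by positivity), Real.sqrt_sq (by positivity)]
  linarith [step1, cs, final]
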